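/- Let M be a bounded open subset of ℝ², h > 0, and Ω = M × (−h, 0) ⊂ ℝ³. Let ψ : ℝ³ → ℝ be continuously differentiable, and let κ_h, κ_v, α > 0. Define ‖ψ‖_V² = κ_h(∫_Ω (∂_xψ)² + ∫_Ω (∂_yψ)²) + κ_v(∫_Ω (∂_zψ)² + α·∫_M ψ(x,y,0)² dx dy). Then ∫_Ω ψ² + ∫_Ω (∂_xψ)² + ∫_Ω (∂_yψ)² + ∫_Ω (∂_zψ)² ≤ max{1/κ_h, (1 + h²)/κ_v, 2h/(κ_v α)} · ‖ψ‖_V². -/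

import Mathlib

open MeasureTheory

/-- Partial derivative in the first coordinate. -/
noncomputable def pdx (g : ℝ × ℝ × ℝ → ℝ) (q : ℝ × ℝ × ℝ) : ℝ :=
  deriv (fun t => g (t, q.2.1, q.2.2)) q.1

/-- Partial derivative in the second coordinate. -/
noncomputable def pdy (g : ℝ × ℝ × ℝ → ℝ) (q : ℝ × ℝ × ℝ) : ℝ :=
  deriv (fun t => g (q.1, t, q.2.2)) q.2.1

/-- Partial derivative in the third coordinate. -/
noncomputable def pdz (g : ℝ × ℝ × ℝ → ℝ) (q : ℝ × ℝ × ℝ) : ℝ :=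
  deriv (fun t => g (q.1, q.2.1, t)) q.2.2

/-- Cauchy–Schwarz for set integrals: `(∫_s f)² ≤ μ(s) ∫_s f²`. -/
lemma sq_setIntegral_le {X : Type*} [MeasurableSpace X] (μ : Measure X) {s : Set X}
    (hs : μ s ≠ ⊤) {f : X → ℝ} (hf : IntegrableOn f s μ)
    (hf2 : IntegrableOn (fun x => f x ^ 2) s μ) :
    (∫ x in s, f x ∂μ) ^ 2 ≤ (μ s).toReal * ∫ x in s, f x ^ 2 ∂μ := by
  set m := (μ s).toReal with hm
  set B := ∫ x in s, f x ^ 2 ∂μ with hB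
  set A := ∫ x in s, |f x| ∂μ with hA
  have habs : |∫ x in s, f x ∂μ| ≤ A := by
    simpa [Real.norm_eq_abs] using norm_integral_le_integral_norm (μ := μ.restrict s) f
  have hfin : IsFiniteMeasure (μ.restrict s) := by
    constructor
    rw [Measure.restrict_apply_univ]
    exact lt_of_le_of_ne le_top hs
  have hkey : ∀ t : ℝ, 0 ≤ m * (t * t) + (-2 * A) * t + B := by
    intro t
    have hptw : ∀ x, 0 ≤ t * t - 2 * t * |f x| + f x ^ 2 := by
      intro x
      nlinarith [sq_nonneg (|f x| - t), sq_abs (f x)]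
    have h1 : Integrable (fun x => t * t - 2 * t * |f x|) (μ.restrict s) := by
      exact (integrable_const (t * t)).sub (hf.abs.const_mul (2 * t))
    have h0 : 0 ≤ ∫ x in s, (t * t - 2 * t * |f x| + f x ^ 2) ∂μ :=
      integral_nonneg hptw
    have hmu : (μ.restrict s) Set.univ = μ s := Measure.restrict_apply_univ s
    have hval : ∫ x in s, (t * t - 2 * t * |f x| + f x ^ 2) ∂μ
        = t * t * m - 2 * t * A + B := by
      rw [integral_add h1 hf2,
        integral_sub (integrable_const (t * t)) (hf.abs.const_mul (2 * t)), integral_const,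
        integral_const_mul, measureReal_def, hmu]
      simp [hm, hA, hB, mul_comm]
    rw [hval] at h0
    nlinarith [h0]
  have hd := discrim_le_zero hkey
  rw [discrim] at hd
  have hA2 : A ^ 2 ≤ m * B := by nlinarith [hd]
  calc (∫ x in s, f x ∂μ) ^ 2 = |∫ x in s, f x ∂μ| ^ 2 := (sq_abs _).symm
    _ ≤ A ^ 2 := by
        have h0 : (0:ℝ) ≤ |∫ x in s, f x ∂μ| := abs_nonneg _
        nlinarith [habs]
    _ ≤ m * B := hA2

/-- A continuous function is integrable on a bounded measurable set. -/
lemma cont_integrableOn_bdd {X : Type*} [MeasureSpace X] [MetricSpace X] [ProperSpace X]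
    [BorelSpace X] [IsFiniteMeasureOnCompacts (volume : Measure X)]
    {f : X → ℝ} (hf : Continuous f) {s : Set X} (hsm : MeasurableSet s)
    (hs : Bornology.IsBounded s) : IntegrableOn f s volume := by
  obtain ⟨C, hC⟩ := hs.isCompact_closure.exists_bound_of_continuousOn hf.continuousOn
  refine Measure.integrableOn_of_bounded hs.measure_lt_top.ne
    hf.aestronglyMeasurable (M := C) ?_
  filter_upwards [ae_restrict_mem hsm] with x hx
  exact hC x (subset_closure hx)

/-- One-dimensional Poincaré-type bound on a slice. -/
lemma slice_bound {g : ℝ → ℝ} (hg : ContDiff ℝ 1 g) {h : ℝ} (hh : 0 < h) :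
    ∫ z in Set.Ioo (-h) 0, (g z) ^ 2
      ≤ 2 * h * (g 0) ^ 2 + h ^ 2 * ∫ z in Set.Ioo (-h) 0, (deriv g z) ^ 2 := by
  have hgc : Continuous g := hg.continuous
  have hg' : Continuous (deriv g) := hg.continuous_deriv le_rfl
  set G := ∫ z in Set.Ioo (-h) 0, (deriv g z) ^ 2 with hGdef
  have hG : 0 ≤ G := integral_nonneg fun z => sq_nonneg _
  have hGIoc : G = ∫ z in Set.Ioc (-h) 0, (deriv g z) ^ 2 :=
    (integral_Ioc_eq_integral_Ioo).symm
  have key : ∀ z ∈ Set.Ioo (-h) 0, (g z) ^ 2 ≤ 2 * (g 0) ^ 2 + 2 * ((-z) * G) := by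
    intro z hz
    have hz0 : z ≤ 0 := le_of_lt hz.2
    have ftc : ∫ t in z..0, deriv g t = g 0 - g z :=
      intervalIntegral.integral_deriv_eq_sub
        (fun x _ => (hg.differentiable one_ne_zero).differentiableAt)
        (hg'.intervalIntegrable _ _)
    have hb2 : (∫ t in z..0, deriv g t) ^ 2 ≤ (-z) * ∫ t in Set.Ioc z 0, (deriv g t) ^ 2 := by
      rw [intervalIntegral.integral_of_le hz0]
      have hvol : (volume (Set.Ioc z 0)).toReal = -z := by
        rw [Real.volume_Ioc, ENNReal.toReal_ofReal (by linarith)]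
        ring
      have := sq_setIntegral_le (volume) (s := Set.Ioc z 0)
        (by rw [Real.volume_Ioc]; exact ENNReal.ofReal_ne_top)
        (hg'.integrableOn_Ioc) ((hg'.pow 2).integrableOn_Ioc)
      rwa [hvol] at this
    have hmono : ∫ t in Set.Ioc z 0, (deriv g t) ^ 2 ≤ G := by
      rw [hGIoc]
      refine setIntegral_mono_set ((hg'.pow 2).integrableOn_Ioc)
        (Filter.Eventually.of_forall fun t => sq_nonneg _) ?_
      exact HasSubset.Subset.eventuallyLE (Set.Ioc_subset_Ioc_left (le_of_lt hz.1))
    have hzn : 0 ≤ -z := by linarith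
    have hb2' : (∫ t in z..0, deriv g t) ^ 2 ≤ (-z) * G :=
      le_trans hb2 (by nlinarith [hmono])
    set b := ∫ t in z..0, deriv g t with hbdef
    have hgz : g z = g 0 - b := by linarith [ftc]
    rw [hgz]
    nlinarith [sq_nonneg (g 0 + b), hb2']
  have int1 : IntegrableOn (fun z => (g z) ^ 2) (Set.Ioo (-h) 0) volume :=
    ((hgc.pow 2).integrableOn_Ioc).mono_set Set.Ioo_subset_Ioc_self
  have int2 : IntegrableOn (fun z => 2 * (g 0) ^ 2 + 2 * ((-z) * G)) (Set.Ioo (-h) 0) volume :=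
    ((Continuous.add continuous_const
      (continuous_const.mul (continuous_neg.mul continuous_const))).integrableOn_Ioc).mono_set
      Set.Ioo_subset_Ioc_self
  have hmono2 := setIntegral_mono_on int1 int2 measurableSet_Ioo key
  have hval : ∫ z in Set.Ioo (-h) 0, (2 * (g 0) ^ 2 + 2 * ((-z) * G))
      = 2 * h * (g 0) ^ 2 + h ^ 2 * G := by
    rw [← integral_Ioc_eq_integral_Ioo, ← intervalIntegral.integral_of_le (by linarith : -h ≤ 0)]
    have : ∫ z in (-h)..0, (2 * (g 0) ^ 2 + 2 * ((-z) * G))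
        = ∫ z in (-h)..0, (2 * (g 0) ^ 2 + (2 * G) * (-z)) := by
      congr 1; ext z; ring
    rw [this, intervalIntegral.integral_add (g := fun z : ℝ => (2 * G) * (-z)) (intervalIntegrable_const)
      (((continuous_const.mul continuous_neg)).intervalIntegrable _ _),
      intervalIntegral.integral_const]
    have hneg : ∫ z in (-h)..0, (2 * G) * (-z) = (2 * G) * (h ^ 2 / 2) := by
      rw [intervalIntegral.integral_const_mul]
      have : ∫ z in (-h)..0, -z = h ^ 2 / 2 := by
        rw [intervalIntegral.integral_neg, integral_id]
        ring
      rw [this]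
    rw [hneg]
    simp
    ring
  calc ∫ z in Set.Ioo (-h) 0, (g z) ^ 2
      ≤ ∫ z in Set.Ioo (-h) 0, (2 * (g 0) ^ 2 + 2 * ((-z) * G)) := hmono2
    _ = 2 * h * (g 0) ^ 2 + h ^ 2 * G := hval

lemma pdx_eq {ψ : ℝ × ℝ × ℝ → ℝ} (hψ : ContDiff ℝ 1 ψ) (q : ℝ × ℝ × ℝ) :
    pdx ψ q = fderiv ℝ ψ q (1, 0, 0) := by
  have h1 : HasDerivAt (fun t : ℝ => (t, q.2.1, q.2.2)) ((1:ℝ), (0:ℝ), (0:ℝ)) q.1 :=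
    (hasDerivAt_id q.1).prodMk ((hasDerivAt_const _ _).prodMk (hasDerivAt_const _ _))
  have h2 : HasDerivAt (fun t => ψ (t, q.2.1, q.2.2)) (fderiv ℝ ψ q (1, 0, 0)) q.1 := by
    have := ((hψ.differentiable one_ne_zero) (q.1, q.2.1, q.2.2)).hasFDerivAt.comp_hasDerivAt q.1 h1
    exact this
  exact h2.deriv

lemma pdy_eq {ψ : ℝ × ℝ × ℝ → ℝ} (hψ : ContDiff ℝ 1 ψ) (q : ℝ × ℝ × ℝ) :
    pdy ψ q = fderiv ℝ ψ q (0, 1, 0) := by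
  have h1 : HasDerivAt (fun t : ℝ => (q.1, t, q.2.2)) ((0:ℝ), (1:ℝ), (0:ℝ)) q.2.1 :=
    (hasDerivAt_const _ _).prodMk ((hasDerivAt_id q.2.1).prodMk (hasDerivAt_const _ _))
  have h2 : HasDerivAt (fun t => ψ (q.1, t, q.2.2)) (fderiv ℝ ψ q (0, 1, 0)) q.2.1 := by
    have := ((hψ.differentiable one_ne_zero) (q.1, q.2.1, q.2.2)).hasFDerivAt.comp_hasDerivAt q.2.1 h1
    exact this
  exact h2.deriv

lemma pdz_eq {ψ : ℝ × ℝ × ℝ → ℝ} (hψ : ContDiff ℝ 1 ψ) (q : ℝ × ℝ × ℝ) :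
    pdz ψ q = fderiv ℝ ψ q (0, 0, 1) := by
  have h1 : HasDerivAt (fun t : ℝ => (q.1, q.2.1, t)) ((0:ℝ), (0:ℝ), (1:ℝ)) q.2.2 :=
    (hasDerivAt_const _ _).prodMk ((hasDerivAt_const _ _).prodMk (hasDerivAt_id q.2.2))
  have h2 : HasDerivAt (fun t => ψ (q.1, q.2.1, t)) (fderiv ℝ ψ q (0, 0, 1)) q.2.2 := by
    have := ((hψ.differentiable one_ne_zero) (q.1, q.2.1, q.2.2)).hasFDerivAt.comp_hasDerivAt q.2.2 h1
    exact this
  exact h2.deriv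

lemma continuous_pd_apply {ψ : ℝ × ℝ × ℝ → ℝ} (hψ : ContDiff ℝ 1 ψ) (v : ℝ × ℝ × ℝ) :
    Continuous (fun q => fderiv ℝ ψ q v) :=
  (hψ.continuous_fderiv one_ne_zero).clm_apply continuous_const

/-- Fubini over the slab `{q | (q.1, q.2.1) ∈ M ∧ q.2.2 ∈ I}`. -/
lemma fubini_slab {M : Set (ℝ × ℝ)} {I : Set ℝ} (f : ℝ × ℝ × ℝ → ℝ)
    (hf : IntegrableOn (fun p : (ℝ × ℝ) × ℝ => f (p.1.1, p.1.2, p.2)) (M ×ˢ I)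
      ((volume : Measure (ℝ × ℝ)).prod (volume : Measure ℝ))) :
    ∫ q in {q : ℝ × ℝ × ℝ | (q.1, q.2.1) ∈ M ∧ q.2.2 ∈ I}, f q
      = ∫ xy in M, (∫ z in I, f (xy.1, xy.2, z)) := by
  have hmp : MeasurePreserving (MeasurableEquiv.prodAssoc : (ℝ × ℝ) × ℝ ≃ᵐ ℝ × ℝ × ℝ)
      (volume : Measure ((ℝ × ℝ) × ℝ)) (volume : Measure (ℝ × ℝ × ℝ)) := by
    have := measurePreserving_prodAssoc (volume : Measure ℝ) (volume : Measure ℝ)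
      (volume : Measure ℝ)
    rw [Measure.volume_eq_prod, Measure.volume_eq_prod, Measure.volume_eq_prod]
    exact this
  have hpre : (MeasurableEquiv.prodAssoc : (ℝ × ℝ) × ℝ ≃ᵐ ℝ × ℝ × ℝ) ⁻¹'
      {q : ℝ × ℝ × ℝ | (q.1, q.2.1) ∈ M ∧ q.2.2 ∈ I} = M ×ˢ I := by
    ext p
    simp [MeasurableEquiv.prodAssoc, Equiv.prodAssoc, Set.mem_prod]
  rw [← hmp.setIntegral_preimage_emb
    (MeasurableEquiv.prodAssoc).measurableEmbedding f _, hpre]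
  have : ∫ p in M ×ˢ I, f (MeasurableEquiv.prodAssoc p) ∂(volume : Measure ((ℝ × ℝ) × ℝ))
      = ∫ p in M ×ˢ I, (fun p : (ℝ × ℝ) × ℝ => f (p.1.1, p.1.2, p.2)) p
        ∂((volume : Measure (ℝ × ℝ)).prod (volume : Measure ℝ)) := by
    rw [Measure.volume_eq_prod]
    rfl
  rw [this, setIntegral_prod _ hf]


lemma combine_bound (M : Set (ℝ × ℝ)) (hMmeas : MeasurableSet M) (h : ℝ)
    (ψ : ℝ × ℝ × ℝ → ℝ)
    (hS1 : IntegrableOn (fun xy : ℝ × ℝ => ∫ z in Set.Ioo (-h) 0, (ψ (xy.1, xy.2, z)) ^ 2)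
      M volume)
    (hZ1 : IntegrableOn (fun xy : ℝ × ℝ => ∫ z in Set.Ioo (-h) 0, (pdz ψ (xy.1, xy.2, z)) ^ 2)
      M volume)
    (hψ0 : IntegrableOn (fun xy : ℝ × ℝ => (ψ (xy.1, xy.2, 0)) ^ 2) M volume)
    (hsl : ∀ xy ∈ M, ∫ z in Set.Ioo (-h) 0, (ψ (xy.1, xy.2, z)) ^ 2
      ≤ 2 * h * (ψ (xy.1, xy.2, 0)) ^ 2
        + h ^ 2 * ∫ z in Set.Ioo (-h) 0, (pdz ψ (xy.1, xy.2, z)) ^ 2) :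
    (∫ xy in M, (∫ z in Set.Ioo (-h) 0, (ψ (xy.1, xy.2, z)) ^ 2))
      ≤ 2 * h * (∫ q in M, (ψ (q.1, q.2, 0)) ^ 2)
        + h ^ 2 * ∫ xy in M, (∫ z in Set.Ioo (-h) 0, (pdz ψ (xy.1, xy.2, z)) ^ 2) := by
  have h1 : (∫ xy in M, (∫ z in Set.Ioo (-h) 0, (ψ (xy.1, xy.2, z)) ^ 2))
      ≤ ∫ xy in M, (2 * h * (ψ (xy.1, xy.2, 0)) ^ 2
          + h ^ 2 * ∫ z in Set.Ioo (-h) 0, (pdz ψ (xy.1, xy.2, z)) ^ 2) :=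
    setIntegral_mono_on hS1 ((hψ0.const_mul (2 * h)).add (hZ1.const_mul (h ^ 2))) hMmeas hsl
  have h2 : ∫ xy in M, (2 * h * (ψ (xy.1, xy.2, 0)) ^ 2
        + h ^ 2 * ∫ z in Set.Ioo (-h) 0, (pdz ψ (xy.1, xy.2, z)) ^ 2)
      = 2 * h * (∫ q in M, (ψ (q.1, q.2, 0)) ^ 2)
        + h ^ 2 * ∫ xy in M, (∫ z in Set.Ioo (-h) 0, (pdz ψ (xy.1, xy.2, z)) ^ 2) := by
    rw [integral_add (hψ0.const_mul (2 * h)) (hZ1.const_mul (h ^ 2)),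
      integral_const_mul, integral_const_mul]
  exact h1.trans_eq h2

set_option maxHeartbeats 1000000 in
/-- The `V`-norm (VVV) controls the `H¹`-norm from below:
`‖ψ‖² + ‖∂_xψ‖² + ‖∂_yψ‖² + ‖∂_zψ‖² ≤ max{1/κ_h, (1+h²)/κ_v, 2h/(κ_v α)} ‖ψ‖_V²`. -/
theorem stmt_4 (M : Set (ℝ × ℝ)) (hM : IsOpen M) (hMb : Bornology.IsBounded M)
    (h : ℝ) (hh : 0 < h) (ψ : ℝ × ℝ × ℝ → ℝ) (hψ : ContDiff ℝ 1 ψ)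
    (κh κv α : ℝ) (hκh : 0 < κh) (hκv : 0 < κv) (hα : 0 < α)
    (Ω : Set (ℝ × ℝ × ℝ))
    (hΩ : Ω = {q : ℝ × ℝ × ℝ | (q.1, q.2.1) ∈ M ∧ q.2.2 ∈ Set.Ioo (-h) 0}) :
    (∫ q in Ω, (ψ q) ^ 2) + (∫ q in Ω, (pdx ψ q) ^ 2) + (∫ q in Ω, (pdy ψ q) ^ 2)
        + (∫ q in Ω, (pdz ψ q) ^ 2)
      ≤ max (1 / κh) (max ((1 + h ^ 2) / κv) (2 * h / (κv * α))) *
          (κh * ((∫ q in Ω, (pdx ψ q) ^ 2) + ∫ q in Ω, (pdy ψ q) ^ 2)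
            + κv * ((∫ q in Ω, (pdz ψ q) ^ 2)
                + α * ∫ q in M, (ψ (q.1, q.2, 0)) ^ 2)) := by
  have hMmeas : MeasurableSet M := hM.measurableSet
  have hIb : Bornology.IsBounded (Set.Ioo (-h) 0) := Metric.isBounded_Ioo _ _
  have hPb : Bornology.IsBounded (M ×ˢ Set.Ioo (-h) 0) := hMb.prod hIb
  have hPmeas : MeasurableSet (M ×ˢ Set.Ioo (-h) 0) := hMmeas.prod measurableSet_Ioo
  have hcψ : Continuous ψ := hψ.continuous
  have hcz : Continuous (pdz ψ) := by
    have : pdz ψ = fun q => fderiv ℝ ψ q (0, 0, 1) := funext (pdz_eq hψ)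
    rw [this]; exact continuous_pd_apply hψ _
  have hproj : Continuous (fun p : (ℝ × ℝ) × ℝ => ((p.1.1, p.1.2, p.2) : ℝ × ℝ × ℝ)) := by
    exact (continuous_fst.fst).prodMk ((continuous_fst.snd).prodMk continuous_snd)
  -- integrability on the product
  have hintS : IntegrableOn (fun p : (ℝ × ℝ) × ℝ => (ψ (p.1.1, p.1.2, p.2)) ^ 2)
      (M ×ˢ Set.Ioo (-h) 0) ((volume : Measure (ℝ × ℝ)).prod (volume : Measure ℝ)) := by
    rw [← Measure.volume_eq_prod]
    exact cont_integrableOn_bdd ((hcψ.comp hproj).pow 2) hPmeas hPb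
  have hintZ : IntegrableOn (fun p : (ℝ × ℝ) × ℝ => (pdz ψ (p.1.1, p.1.2, p.2)) ^ 2)
      (M ×ˢ Set.Ioo (-h) 0) ((volume : Measure (ℝ × ℝ)).prod (volume : Measure ℝ)) := by
    rw [← Measure.volume_eq_prod]
    exact cont_integrableOn_bdd ((hcz.comp hproj).pow 2) hPmeas hPb
  -- Fubini
  have eqS : ∫ q in Ω, (ψ q) ^ 2
      = ∫ xy in M, (∫ z in Set.Ioo (-h) 0, (ψ (xy.1, xy.2, z)) ^ 2) := by
    rw [hΩ]; exact fubini_slab (fun q => (ψ q) ^ 2) hintS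
  have eqZ : ∫ q in Ω, (pdz ψ q) ^ 2
      = ∫ xy in M, (∫ z in Set.Ioo (-h) 0, (pdz ψ (xy.1, xy.2, z)) ^ 2) := by
    rw [hΩ]; exact fubini_slab (fun q => (pdz ψ q) ^ 2) hintZ
  -- integrability of inner integrals on M
  have hS1 : IntegrableOn (fun xy : ℝ × ℝ => ∫ z in Set.Ioo (-h) 0, (ψ (xy.1, xy.2, z)) ^ 2)
      M volume := by
    have := hintS
    rw [IntegrableOn, ← Measure.prod_restrict] at this
    exact this.integral_prod_left
  have hZ1 : IntegrableOn (fun xy : ℝ × ℝ => ∫ z in Set.Ioo (-h) 0, (pdz ψ (xy.1, xy.2, z)) ^ 2)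
      M volume := by
    have := hintZ
    rw [IntegrableOn, ← Measure.prod_restrict] at this
    exact this.integral_prod_left
  have hψ0 : IntegrableOn (fun xy : ℝ × ℝ => (ψ (xy.1, xy.2, 0)) ^ 2) M volume := by
    refine cont_integrableOn_bdd ?_ hMmeas hMb
    exact (hcψ.comp (continuous_fst.prodMk (continuous_snd.prodMk continuous_const))).pow 2
  -- pointwise slice bound
  have hsl : ∀ xy ∈ M, ∫ z in Set.Ioo (-h) 0, (ψ (xy.1, xy.2, z)) ^ 2
      ≤ 2 * h * (ψ (xy.1, xy.2, 0)) ^ 2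
        + h ^ 2 * ∫ z in Set.Ioo (-h) 0, (pdz ψ (xy.1, xy.2, z)) ^ 2 := by
    intro xy _
    have hg : ContDiff ℝ 1 (fun t => ψ (xy.1, xy.2, t)) :=
      hψ.comp (contDiff_const.prodMk (contDiff_const.prodMk contDiff_id))
    have hder : (fun z => (pdz ψ (xy.1, xy.2, z)) ^ 2)
        = fun z => (deriv (fun t => ψ (xy.1, xy.2, t)) z) ^ 2 := rfl
    have := slice_bound hg hh
    rw [hder]
    exact this
  -- main estimate
  have hmainS : (∫ q in Ω, (ψ q) ^ 2)
      ≤ 2 * h * (∫ q in M, (ψ (q.1, q.2, 0)) ^ 2) + h ^ 2 * ∫ q in Ω, (pdz ψ q) ^ 2 := by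
    rw [eqS, eqZ]
    exact combine_bound M hMmeas h ψ hS1 hZ1 hψ0 hsl
  set S := ∫ q in Ω, (ψ q) ^ 2 with hS
  set X := ∫ q in Ω, (pdx ψ q) ^ 2 with hX
  set Y := ∫ q in Ω, (pdy ψ q) ^ 2 with hY
  set Z := ∫ q in Ω, (pdz ψ q) ^ 2 with hZ
  set W := ∫ q in M, (ψ (q.1, q.2, 0)) ^ 2 with hW
  have hX0 : 0 ≤ X := integral_nonneg fun q => sq_nonneg _
  have hY0 : 0 ≤ Y := integral_nonneg fun q => sq_nonneg _
  have hZ0 : 0 ≤ Z := integral_nonneg fun q => sq_nonneg _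
  have hW0 : 0 ≤ W := integral_nonneg fun q => sq_nonneg _
  set C := max (1 / κh) (max ((1 + h ^ 2) / κv) (2 * h / (κv * α))) with hC
  have h1 : 1 ≤ C * κh := by
    have := le_max_left (1 / κh) (max ((1 + h ^ 2) / κv) (2 * h / (κv * α)))
    rw [div_le_iff₀ hκh] at this
    linarith
  have h2 : 1 + h ^ 2 ≤ C * κv := by
    have := le_trans (le_max_left ((1 + h ^ 2) / κv) (2 * h / (κv * α)))
      (le_max_right (1 / κh) _)
    rw [div_le_iff₀ hκv] at this
    linarith
  have h3 : 2 * h ≤ C * (κv * α) := by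
    have := le_trans (le_max_right ((1 + h ^ 2) / κv) (2 * h / (κv * α)))
      (le_max_right (1 / κh) _)
    rw [div_le_iff₀ (mul_pos hκv hα)] at this
    linarith
  have p1 : X + Y ≤ C * κh * (X + Y) := by nlinarith [h1, hX0, hY0]
  have p2 : (1 + h ^ 2) * Z ≤ C * κv * Z := by nlinarith [h2, hZ0]
  have p3 : 2 * h * W ≤ C * (κv * α) * W := by nlinarith [h3, hW0]
  nlinarith [p1, p2, p3, hmainS]
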